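/- Let W be the complete wheel graph on n ≥ 6 vertices and let L be an AP 2-landmark set of W. Then L satisfies: for every i, if c_i ∉ L and c_{i+1} ∉ L, then c_{i−3}, c_{i−2}, c_{i−1}, c_{i+2}, c_{i+3}, c_{i+4} ∈ L (indices modulo n−1). -/

import Mathlib

/-- `L` is an AP `k`-landmark set of `G`: every pair of distinct vertices of `V` is
separated (i.e. has different distances) by at least `k` vertices of `L`. -/
def isAPLandmark {V : Type*} (G : SimpleGraph V) (k : ℕ) (L : Finset V) : Prop :=
  ∀ u v : V, u ≠ v → k ≤ (L.filter fun τ => G.dist u τ ≠ G.dist v τ).card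

/-- The complete wheel graph with cycle `c_1, …, c_m` (encoded as `some i` for
`i : ZMod m`) and central vertex `h` (encoded as `none`); a wheel on `n` vertices has
`m = n - 1`. -/
def wheelGraph (m : ℕ) : SimpleGraph (Option (ZMod m)) :=
  SimpleGraph.fromRel fun u v => u = none ∨ ∃ i : ZMod m, u = some i ∧ v = some (i + 1)

section Aux

variable {m : ℕ}

lemma wheel_adj_iff (u v : Option (ZMod m)) :
    (wheelGraph m).Adj u v ↔
    u ≠ v ∧ ((u = none ∨ ∃ i : ZMod m, u = some i ∧ v = some (i + 1)) ∨
      (v = none ∨ ∃ i : ZMod m, v = some i ∧ u = some (i + 1))) := by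
  rw [wheelGraph, SimpleGraph.fromRel_adj]

lemma zmod_natCast_ne (h5 : 5 ≤ m) {k : ℕ} (h1 : 0 < k) (h2 : k < m) : ((k : ZMod m) ≠ 0) := by
  rw [Ne, ZMod.natCast_eq_zero_iff]
  exact fun h => absurd (Nat.le_of_dvd h1 h) (not_le.mpr h2)

lemma wheel_adj_hub (j : ZMod m) : (wheelGraph m).Adj none (some j) := by
  rw [wheel_adj_iff]
  exact ⟨by simp, Or.inl (Or.inl rfl)⟩

lemma wheel_adj_succ (h5 : 5 ≤ m) (j : ZMod m) : (wheelGraph m).Adj (some j) (some (j + 1)) := by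
  rw [wheel_adj_iff]
  refine ⟨fun h => ?_, Or.inl (Or.inr ⟨j, rfl, rfl⟩)⟩
  have h1 : ((1 : ℕ) : ZMod m) ≠ 0 := zmod_natCast_ne h5 one_pos (by omega)
  apply h1
  have := Option.some_injective _ h
  push_cast
  linear_combination -this

lemma wheel_dist_hub (j : ZMod m) : (wheelGraph m).dist none (some j) = 1 :=
  SimpleGraph.dist_eq_one_iff_adj.mpr (wheel_adj_hub j)

lemma wheel_dist_succ (h5 : 5 ≤ m) (j : ZMod m) :
    (wheelGraph m).dist (some j) (some (j + 1)) = 1 :=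
  SimpleGraph.dist_eq_one_iff_adj.mpr (wheel_adj_succ h5 j)

lemma wheel_dist_two (h5 : 5 ≤ m) {j k : ZMod m} (h0 : j ≠ k) (h1 : k ≠ j + 1)
    (h2 : j ≠ k + 1) : (wheelGraph m).dist (some j) (some k) = 2 := by
  have hw : (wheelGraph m).Walk (some j) (some k) :=
    SimpleGraph.Walk.cons (wheel_adj_hub j).symm
      (SimpleGraph.Walk.cons (wheel_adj_hub k) SimpleGraph.Walk.nil)
  have hle : (wheelGraph m).dist (some j) (some k) ≤ 2 := by
    have := SimpleGraph.dist_le (SimpleGraph.Walk.cons (wheel_adj_hub j).symm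
      (SimpleGraph.Walk.cons (wheel_adj_hub k) SimpleGraph.Walk.nil))
    simpa using this
  have hne0 : (wheelGraph m).dist (some j) (some k) ≠ 0 := by
    rw [Ne, SimpleGraph.dist_eq_zero_iff_eq_or_not_reachable]
    push_neg
    exact ⟨fun h => h0 (Option.some_injective _ h), ⟨hw⟩⟩
  have hne1 : (wheelGraph m).dist (some j) (some k) ≠ 1 := by
    rw [Ne, SimpleGraph.dist_eq_one_iff_adj, wheel_adj_iff]
    rintro ⟨hne, (h | ⟨i, hi, hi'⟩) | (h | ⟨i, hi, hi'⟩)⟩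
    · exact Option.some_ne_none _ h
    · have e1 := Option.some_injective _ hi
      have e2 := Option.some_injective _ hi'
      exact h1 (by rw [e2, ← e1])
    · exact Option.some_ne_none _ h
    · have e1 := Option.some_injective _ hi
      have e2 := Option.some_injective _ hi'
      exact h2 (by rw [e2, ← e1])
  omega

lemma zmod_shift_ne (h5 : 5 ≤ m) (a : ZMod m) {k : ℕ} (h1 : 0 < k) (h2 : k < m) :
    a ≠ a + (k : ZMod m) := by
  intro h
  exact zmod_natCast_ne h5 h1 h2 (by linear_combination -h)

/-- Every separator of the adjacent pair `(c_a, c_{a+1})` is one of four vertices. -/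
lemma sep_adj (h5 : 5 ≤ m) (a : ZMod m) (τ : Option (ZMod m))
    (hτ : (wheelGraph m).dist (some a) τ ≠ (wheelGraph m).dist (some (a + 1)) τ) :
    τ = some (a - 1) ∨ τ = some a ∨ τ = some (a + 1) ∨ τ = some (a + 2) := by
  match τ with
  | none =>
    exfalso
    apply hτ
    rw [SimpleGraph.dist_comm, wheel_dist_hub, SimpleGraph.dist_comm, wheel_dist_hub]
  | some j =>
    by_contra hc
    push_neg at hc
    obtain ⟨hc1, hc2, hc3, hc4⟩ := hc
    have n1 : j ≠ a - 1 := fun h => hc1 (by rw [h])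
    have n2 : j ≠ a := fun h => hc2 (by rw [h])
    have n3 : j ≠ a + 1 := fun h => hc3 (by rw [h])
    have n4 : j ≠ a + 2 := fun h => hc4 (by rw [h])
    apply hτ
    rw [wheel_dist_two h5 (fun h => n2 h.symm) n3 (fun h => n1 (by linear_combination -h)),
      wheel_dist_two h5 (fun h => n3 h.symm) (fun h => n4 (by linear_combination h))
        (fun h => n2 (by linear_combination -h))]

/-- Every separator of the pair `(c_a, c_{a+2})` is one of four vertices. -/
lemma sep_two (h5 : 5 ≤ m) (a : ZMod m) (τ : Option (ZMod m))
    (hτ : (wheelGraph m).dist (some a) τ ≠ (wheelGraph m).dist (some (a + 2)) τ) :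
    τ = some (a - 1) ∨ τ = some a ∨ τ = some (a + 2) ∨ τ = some (a + 3) := by
  match τ with
  | none =>
    exfalso
    apply hτ
    rw [SimpleGraph.dist_comm, wheel_dist_hub, SimpleGraph.dist_comm, wheel_dist_hub]
  | some j =>
    by_contra hc
    push_neg at hc
    obtain ⟨hc1, hc2, hc3, hc4⟩ := hc
    have n1 : j ≠ a - 1 := fun h => hc1 (by rw [h])
    have n2 : j ≠ a := fun h => hc2 (by rw [h])
    have n3 : j ≠ a + 2 := fun h => hc3 (by rw [h])
    have n4 : j ≠ a + 3 := fun h => hc4 (by rw [h])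
    apply hτ
    by_cases hj : j = a + 1
    · subst hj
      rw [wheel_dist_succ h5 a, SimpleGraph.dist_comm]
      have : a + 1 + 1 = a + 2 := by ring
      rw [← this, wheel_dist_succ h5 (a + 1)]
    · rw [wheel_dist_two h5 (fun h => n2 h.symm) hj (fun h => n1 (by linear_combination -h)),
        wheel_dist_two h5 (fun h => n3 h.symm) (fun h => n4 (by linear_combination h))
          (fun h => hj (by linear_combination -h))]

lemma landmark_pair {V : Type*} {G : SimpleGraph V} {L : Finset V}
    [DecidableEq V] (hL : isAPLandmark G 2 L) (u v : V) (huv : u ≠ v) (p q r s : V)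
    (hsep : ∀ τ, G.dist u τ ≠ G.dist v τ → τ = p ∨ τ = q ∨ τ = r ∨ τ = s)
    (hr : r ∉ L) (hs : s ∉ L) (hpq : p ≠ q) : p ∈ L ∧ q ∈ L := by
  classical
  set S := L.filter fun τ => G.dist u τ ≠ G.dist v τ with hS
  have h2 : 2 ≤ S.card := hL u v huv
  have hsub : S ⊆ {p, q} := by
    intro t ht
    rw [hS, Finset.mem_filter] at ht
    rcases hsep t ht.2 with h | h | h | h
    · simp [h]
    · simp [h]
    · exact absurd (h ▸ ht.1) hr
    · exact absurd (h ▸ ht.1) hs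
  have hcard : ({p, q} : Finset V).card ≤ S.card := by
    rw [Finset.card_pair hpq]; exact h2
  have hSeq : S = {p, q} := Finset.eq_of_subset_of_card_le hsub hcard
  constructor
  · have : p ∈ S := hSeq ▸ Finset.mem_insert_self p {q}
    rw [hS, Finset.mem_filter] at this; exact this.1
  · have : q ∈ S := hSeq ▸ (by simp : q ∈ ({p, q} : Finset V))
    rw [hS, Finset.mem_filter] at this; exact this.1

end Aux

/-- For the complete wheel graph on `n ≥ 6` vertices, every AP `2`-landmark set `L`
satisfies: for every `i`, if `c_i ∉ L` and `c_{i+1} ∉ L`, then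
`c_{i-3}, c_{i-2}, c_{i-1}, c_{i+2}, c_{i+3}, c_{i+4} ∈ L` (indices modulo `n - 1`). -/
theorem stmt_13 (n : ℕ) (hn : 6 ≤ n)
    (L : Finset (Option (ZMod (n - 1))))
    (hL : isAPLandmark (wheelGraph (n - 1)) 2 L) :
    ∀ i : ZMod (n - 1), some i ∉ L → some (i + 1) ∉ L →
      some (i - 3) ∈ L ∧ some (i - 2) ∈ L ∧ some (i - 1) ∈ L ∧
      some (i + 2) ∈ L ∧ some (i + 3) ∈ L ∧ some (i + 4) ∈ L := by
  intro i hi hi1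
  have h5 : 5 ≤ n - 1 := by omega
  have hone : ∀ a : ZMod (n - 1), (some a : Option (ZMod (n - 1))) ≠ some (a + 1) := by
    intro a h
    exact zmod_shift_ne h5 a (k := 1) one_pos (by omega) (by
      have := Option.some_injective _ h; push_cast; linear_combination this)
  have htwo : ∀ a : ZMod (n - 1), (some a : Option (ZMod (n - 1))) ≠ some (a + 2) := by
    intro a h
    exact zmod_shift_ne h5 a (k := 2) two_pos (by omega) (by
      have := Option.some_injective _ h; push_cast; linear_combination this)
  have sone : ∀ a b : ZMod (n - 1), b = a + 1 → (some a : Option (ZMod (n - 1))) ≠ some b := by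
    rintro a b rfl; exact hone a
  -- B2 : pair (c_{i-2}, c_i) gives c_{i-3}, c_{i-2} ∈ L
  have hB2 : some (i - 3) ∈ L ∧ some (i - 2) ∈ L := by
    refine landmark_pair hL (some (i - 2)) (some i) ?_ (some (i - 3)) (some (i - 2))
      (some i) (some (i + 1)) ?_ hi hi1 ?_
    · have := htwo (i - 2); rwa [show i - 2 + 2 = i by ring] at this
    · intro τ hτ
      have := sep_two h5 (i - 2) τ (by rw [show i - 2 + 2 = i by ring]; exact hτ)
      rw [show i - 2 - 1 = i - 3 by ring, show i - 2 + 2 = i by ring,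
        show i - 2 + 3 = i + 1 by ring] at this
      tauto
    · exact sone (i - 3) (i - 2) (by ring)
  -- B : pair (c_{i-1}, c_i) gives c_{i-2}, c_{i-1} ∈ L
  have hB : some (i - 2) ∈ L ∧ some (i - 1) ∈ L := by
    refine landmark_pair hL (some (i - 1)) (some i) ?_ (some (i - 2)) (some (i - 1))
      (some i) (some (i + 1)) ?_ hi hi1 ?_
    · have := hone (i - 1); rwa [show i - 1 + 1 = i by ring] at this
    · intro τ hτ
      have := sep_adj h5 (i - 1) τ (by rw [show i - 1 + 1 = i by ring]; exact hτ)
      rw [show i - 1 - 1 = i - 2 by ring, show i - 1 + 1 = i by ring,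
        show i - 1 + 2 = i + 1 by ring] at this
      tauto
    · exact sone (i - 2) (i - 1) (by ring)
  -- C : pair (c_{i+1}, c_{i+2}) gives c_{i+2}, c_{i+3} ∈ L
  have hC : some (i + 2) ∈ L ∧ some (i + 3) ∈ L := by
    refine landmark_pair hL (some (i + 1)) (some (i + 2)) ?_ (some (i + 2)) (some (i + 3))
      (some i) (some (i + 1)) ?_ hi hi1 ?_
    · exact sone (i + 1) (i + 2) (by ring)
    · intro τ hτ
      have := sep_adj h5 (i + 1) τ (by rw [show i + 1 + 1 = i + 2 by ring]; exact hτ)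
      rw [show i + 1 - 1 = i by ring, show i + 1 + 1 = i + 2 by ring,
        show i + 1 + 2 = i + 3 by ring] at this
      tauto
    · exact sone (i + 2) (i + 3) (by ring)
  -- D : pair (c_{i+1}, c_{i+3}) gives c_{i+3}, c_{i+4} ∈ L
  have hD : some (i + 3) ∈ L ∧ some (i + 4) ∈ L := by
    refine landmark_pair hL (some (i + 1)) (some (i + 3)) ?_ (some (i + 3)) (some (i + 4))
      (some i) (some (i + 1)) ?_ hi hi1 ?_
    · have := htwo (i + 1); rwa [show i + 1 + 2 = i + 3 by ring] at this
    · intro τ hτ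
      have := sep_two h5 (i + 1) τ (by rw [show i + 1 + 2 = i + 3 by ring]; exact hτ)
      rw [show i + 1 - 1 = i by ring, show i + 1 + 2 = i + 3 by ring,
        show i + 1 + 3 = i + 4 by ring] at this
      tauto
    · exact sone (i + 3) (i + 4) (by ring)
  exact ⟨hB2.1, hB.1, hB.2, hC.1, hC.2, hD.2⟩
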